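/- Let F = ℚ(ζ₇)⁺ with ring of integers O_F = ℤ[α], α = ζ₇ + ζ₇⁻¹. Then the different ideal ∂_F of F/ℚ is the principal ideal generated by (2 - α)², and δ = (2 - α)² is a totally positive generator of ∂_F. -/

import Mathlib

open Polynomial NumberField

set_option maxHeartbeats 1000000 in
set_option synthInstance.maxHeartbeats 200000 in
theorem different_of_Q_zeta7_plus
    (K : Type*) [Field K] [NumberField K] (ζ : K) (hζ : IsPrimitiveRoot ζ 7)
    (F : IntermediateField ℚ K) (hF : F = IntermediateField.adjoin ℚ {ζ + ζ⁻¹})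
    (a : 𝓞 F) (haF : ((algebraMap (𝓞 F) F a : F) : K) = ζ + ζ⁻¹)
    (hgen : Algebra.adjoin ℤ {a} = ⊤) :
    differentIdeal ℤ (𝓞 F) = Ideal.span {(2 - a) ^ 2} ∧
    (∀ σ : F →+* ℝ, 0 < σ (algebraMap (𝓞 F) F ((2 - a) ^ 2))) := by
  have hz0 : ζ ≠ 0 := hζ.ne_zero (by norm_num)
  have hz7 : ζ ^ 7 = 1 := hζ.pow_eq_one
  have hinv : ζ⁻¹ = ζ ^ 6 :=
    inv_eq_of_mul_eq_one_right (by rw [← pow_succ' ζ 6]; exact hz7)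
  have hsum : 1 + ζ + ζ ^ 2 + ζ ^ 3 + ζ ^ 4 + ζ ^ 5 + ζ ^ 6 = 0 := by
    have := hζ.geom_sum_eq_zero (by norm_num)
    simpa [Finset.sum_range_succ, add_assoc] using this
  -- the cubic relation in K
  have hKrel : (ζ + ζ⁻¹) ^ 3 + (ζ + ζ⁻¹) ^ 2 - 2 * (ζ + ζ⁻¹) - 1 = 0 := by
    rw [hinv]
    linear_combination (ζ ^ 11 + ζ ^ 5 + ζ ^ 4 + 3 * ζ ^ 6 + 3 * ζ + 2) * hz7 + hsum
  -- transfer the cubic relation to 𝓞 F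
  have hinj : Function.Injective
      ((algebraMap F K).comp (algebraMap (𝓞 F) F)) :=
    (algebraMap F K).injective.comp (IsFractionRing.injective (𝓞 F) F)
  have hrel : a ^ 3 + a ^ 2 - 2 * a - 1 = 0 := by
    apply hinj
    have hcoe : ((algebraMap F K).comp (algebraMap (𝓞 F) F)) a = ζ + ζ⁻¹ := haF
    rw [map_sub, map_sub, map_add, map_pow, map_pow, map_mul, map_one, map_ofNat, hcoe,
      hKrel, map_zero]
  -- a ≠ 2 in F
  have hne2 : (2 : F) - algebraMap (𝓞 F) F a ≠ 0 := by
    intro h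
    have h2 : ζ + ζ⁻¹ = 2 := by
      have h' : ((algebraMap (𝓞 F) F a : F) : K) = ((2 : F) : K) := by
        rw [show (algebraMap (𝓞 F) F a : F) = 2 from (sub_eq_zero.mp h).symm]
      rw [haF] at h'
      exact h'.trans (map_ofNat (algebraMap F K) 2)
    have hsq : (ζ - 1) ^ 2 = 0 := by
      have hmul : ζ * ζ⁻¹ = 1 := mul_inv_cancel₀ hz0
      linear_combination ζ * h2 - hmul
    exact hζ.ne_one (by norm_num) (sub_eq_zero.mp (pow_eq_zero_iff (by norm_num) |>.mp hsq))
  -- positivity part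
  have hpos : ∀ σ : F →+* ℝ, 0 < σ (algebraMap (𝓞 F) F ((2 - a) ^ 2)) := by
    intro σ
    have hm : algebraMap (𝓞 F) F ((2 - a) ^ 2) = ((2 : F) - algebraMap (𝓞 F) F a) ^ 2 := by
      rw [map_pow, map_sub, map_ofNat]
    rw [hm, map_pow]
    exact pow_two_pos_of_ne_zero (fun h => hne2 (σ.injective (by simpa using h)))
  refine ⟨?_, hpos⟩
  -- the minimal polynomial of a over ℤ
  set p : ℤ[X] := X ^ 3 + X ^ 2 - 2 * X - 1 with hp_def
  have hpmonic : p.Monic := by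
    unfold p
    monicity!
  have hpdeg : p.natDegree = 3 := by
    rw [hp_def]
    compute_degree!
  have haroot : aeval a p = 0 := by
    rw [hp_def]
    simp only [map_add, map_sub, map_mul, map_pow, aeval_X, map_one, map_ofNat]
    linear_combination hrel
  have hpirr : Irreducible p := by
    apply hpmonic.irreducible_of_irreducible_map (Int.castRingHom (ZMod 2))
    have hm : (p.map (Int.castRingHom (ZMod 2))).Monic := hpmonic.map _
    have hdeg : (p.map (Int.castRingHom (ZMod 2))).natDegree = 3 := by
      rw [hpmonic.natDegree_map, hpdeg]
    rw [hm.irreducible_iff_roots_eq_zero_of_degree_le_three (by omega) (by omega)]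
    rw [Multiset.eq_zero_iff_forall_notMem]
    intro x hx
    rw [mem_roots hm.ne_zero, IsRoot.def, eval_map, hp_def] at hx
    simp only [eval₂_add, eval₂_sub, eval₂_mul, eval₂_pow, eval₂_X, eval₂_one,
      eval₂_ofNat] at hx
    revert hx
    revert x
    decide
  have hint : IsIntegral ℤ a := IsIntegralClosure.isIntegral ℤ F a
  have hmp : minpoly ℤ a = p := by
    have hdvd : minpoly ℤ a ∣ p := minpoly.isIntegrallyClosed_dvd hint haroot
    have hassoc : Associated (minpoly ℤ a) p :=
      ((minpoly.prime_of_isIntegrallyClosed hint).irreducible).associated_of_dvd hpirr hdvd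
    exact Polynomial.eq_of_monic_of_associated (minpoly.monic hint) hpmonic hassoc
  -- generator fact: adjoin ℚ {aF} = ⊤
  have hxint : IsIntegral ℚ ((algebraMap (𝓞 F) F a : F)) := IsIntegral.of_finite ℚ _
  have hIF : IntermediateField.adjoin ℚ {(algebraMap (𝓞 F) F a : F)} = ⊤ := by
    apply IntermediateField.map_injective F.val
    erw [IntermediateField.adjoin_map, ← AlgHom.fieldRange_eq_map,
      IntermediateField.fieldRange_val]
    have himg : F.val '' {(algebraMap (𝓞 F) F a : F)} = {ζ + ζ⁻¹} := by
      rw [Set.image_singleton]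
      exact congrArg _ haF
    rw [himg, ← hF]
  have hx : Algebra.adjoin ℚ {(algebraMap (𝓞 F) F a : F)} = ⊤ := by
    have h1 := IntermediateField.adjoin_simple_toSubalgebra_of_isAlgebraic hxint.isAlgebraic
    rw [← h1, show IntermediateField.adjoin ℚ {(algebraMap (𝓞 F) F a : F)}
        = (⊤ : IntermediateField ℚ F) from hIF]
    exact IntermediateField.top_toSubalgebra
  have hdiff : differentIdeal ℤ (𝓞 F) = Ideal.span {aeval a (derivative (minpoly ℤ a))} := by
    have := conductor_mul_differentIdeal ℤ ℚ F a hx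
    rwa [conductor_eq_top_of_adjoin_eq_top hgen, Ideal.top_mul] at this
  -- compute the derivative value
  have hder : aeval a (derivative (minpoly ℤ a)) = 3 * a ^ 2 + 2 * a - 2 := by
    have hd : derivative p = 3 * X ^ 2 + 2 * X - 2 := by
      rw [hp_def]
      simp [derivative_pow]
    rw [hmp, hd]
    simp only [map_add, map_sub, map_mul, map_pow, aeval_X, map_ofNat]
  rw [hdiff, hder]
  apply Ideal.span_singleton_eq_span_singleton.mpr
  refine ⟨⟨2 * a ^ 2 - 3, 2 * a ^ 2 + 4 * a + 1, ?_, ?_⟩, ?_⟩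
  · linear_combination (4 * a + 4) * hrel
  · linear_combination (4 * a + 4) * hrel
  · show (3 * a ^ 2 + 2 * a - 2) * (2 * a ^ 2 - 3) = (2 - a) ^ 2
    linear_combination (6 * a - 2) * hrel
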